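/- Let γ ∈ SL₂(ℤ₂) be of finite order with (γ² − 1)² = 0. Then either (γ−1)² = 0 or (γ+1)² = 0; in both cases (γ−1)² ∈ 4·M₂(ℤ₂). -/

import Mathlib

lemma cayley_hamilton_fin_two {R : Type*} [CommRing R] (M : Matrix (Fin 2) (Fin 2) R) :
    M ^ 2 - M.trace • M + M.det • (1 : Matrix (Fin 2) (Fin 2) R) = 0 := by
  ext i j
  fin_cases i <;> fin_cases j <;>
    simp [pow_two, Matrix.mul_apply, Matrix.trace, Matrix.det_fin_two, Fin.sum_univ_succ,
      Matrix.one_apply] <;> ring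

theorem stmt_12 (γ : Matrix (Fin 2) (Fin 2) ℤ_[2])
    (hdet : γ.det = 1)
    (hord : ∃ k : ℕ, 1 ≤ k ∧ γ ^ k = 1)
    (h : (γ ^ 2 - 1) ^ 2 = 0) :
    ((γ - 1) ^ 2 = 0 ∨ (γ + 1) ^ 2 = 0) ∧
      ∃ B : Matrix (Fin 2) (Fin 2) ℤ_[2], (γ - 1) ^ 2 = (4 : ℤ_[2]) • B := by
  have hCH := cayley_hamilton_fin_two γ
  rw [hdet, one_smul] at hCH
  set t := γ.trace with ht
  -- γ ^ 2 = t • γ - 1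
  have hγ2 : γ ^ 2 = t • γ - 1 := by
    have := hCH
    linear_combination (norm := module) this
  have hm : (γ - 1) ^ 2 = (t - 2) • γ := by
    have : (γ - 1) ^ 2 = γ ^ 2 - 2 • γ + 1 := by noncomm_ring
    rw [this, hγ2]; module
  have hp : (γ + 1) ^ 2 = (t + 2) • γ := by
    have : (γ + 1) ^ 2 = γ ^ 2 + 2 • γ + 1 := by noncomm_ring
    rw [this, hγ2]; module
  -- (γ²-1)² = (t-2)(t+2) • γ²
  have hsq : ((t - 2) * (t + 2)) • γ ^ 2 = 0 := by
    have e : (γ ^ 2 - 1) ^ 2 = (γ - 1) ^ 2 * (γ + 1) ^ 2 := by noncomm_ring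
    rw [e, hm, hp] at h
    rw [← h, Matrix.smul_mul, Matrix.mul_smul, smul_smul, pow_two]
  have hts : (t - 2) * (t + 2) = 0 := by
    have hd := congrArg Matrix.det hsq
    rw [Matrix.det_smul, Matrix.det_pow, hdet, Matrix.det_zero, one_pow, mul_one] at hd
    · exact pow_eq_zero_iff (n := Fintype.card (Fin 2)) (by simp) |>.mp hd
  rcases mul_eq_zero.mp hts with h2 | h2
  · have ht2 : t = 2 := by linear_combination h2
    constructor
    · left; rw [hm, ht2]; simp
    · exact ⟨0, by rw [hm, ht2]; simp⟩
  · have ht2 : t = -2 := by linear_combination h2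
    constructor
    · right; rw [hp, ht2]; simp
    · refine ⟨-γ, ?_⟩
      rw [hm, ht2]
      module
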